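/- Let α, β : R → [0,∞) be finitely additive set functions on a ring of sets R, with both α and β bounded. If the form b is absolutely continuous with respect to the form a (i.e., for every sequence (φ_n) of R-simple functions with a(φ_n,φ_n) → 0 and b(φ_n − φ_m, φ_n − φ_m) → 0 as n,m → ∞ one has b(φ_n,φ_n) → 0), then β is absolutely continuous with respectis to α, i.e., for every ε > 0 there exists δ > 0 such that α(E) < δ implies β(E) < ε for all E ∈ R. -/

import Mathlib

open Filter Topology

/-- `s : D → D → ℂ` is a nonnegative Hermitian form: linear in the first argument,
conjugate-symmetric, and with nonnegative diagonal. -/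
def IsNonnegHermForm {D : Type*} [AddCommGroup D] [Module ℂ D] (s : D → D → ℂ) : Prop :=
  (∀ x y z : D, s (x + y) z = s x z + s y z) ∧
  (∀ (c : ℂ) (x y : D), s (c • x) y = c * s x y) ∧
  (∀ x y : D, s x y = (starRingEnd ℂ) (s y x)) ∧
  (∀ x : D, 0 ≤ (s x x).re)

/-- `s` is absolutely continuous with respect to `t`. -/
def FormAC {D : Type*} [AddCommGroup D] [Module ℂ D] (s t : D → D → ℂ) : Prop :=
  ∀ x : ℕ → D,
    Tendsto (fun n => t (x n) (x n)) atTop (𝓝 0) →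
    Tendsto (fun p : ℕ × ℕ => s (x p.1 - x p.2) (x p.1 - x p.2)) atTop (𝓝 0) →
    Tendsto (fun n => s (x n) (x n)) atTop (𝓝 0)

/-- The complex vector space of `R`-simple functions: the span of the indicator
functions `χ_E`, `E ∈ R`. -/
noncomputable def simpleSpan (T : Type*) (R : Set (Set T)) : Submodule ℂ (T → ℂ) :=
  Submodule.span ℂ {f | ∃ E ∈ R, f = E.indicator (fun _ => (1 : ℂ))}

/-- The indicator of a member of `R` belongs to the space of `R`-simple functions. -/
theorem indicator_mem_simpleSpan {T : Type*} {R : Set (Set T)} {E : Set T} (hE : E ∈ R) :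
    E.indicator (fun _ => (1 : ℂ)) ∈ simpleSpan T R :=
  Submodule.subset_span ⟨E, hE, rfl⟩


section Aux

variable {T : Type*} {R : Set (Set T)}

lemma myInterMem (hdiff : ∀ E ∈ R, ∀ F ∈ R, E \ F ∈ R)
    {E F : Set T} (hE : E ∈ R) (hF : F ∈ R) : E ∩ F ∈ R := by
  have h : E ∩ F = E \ (E \ F) := by ext t; simp only [Set.mem_inter_iff, Set.mem_diff]; tauto
  rw [h]; exact hdiff _ hE _ (hdiff _ hE _ hF)

variable {γ : Set T → ℝ}

lemma myMono (hdiff : ∀ E ∈ R, ∀ F ∈ R, E \ F ∈ R)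
    (hγ0 : ∀ E ∈ R, 0 ≤ γ E)
    (hadd : ∀ E ∈ R, ∀ F ∈ R, Disjoint E F → γ (E ∪ F) = γ E + γ F)
    {E F : Set T} (hE : E ∈ R) (hF : F ∈ R) (hEF : E ⊆ F) : γ E ≤ γ F := by
  have h1 : F \ E ∈ R := hdiff _ hF _ hE
  have hd : Disjoint E (F \ E) := Set.disjoint_left.mpr fun x hx hx' => hx'.2 hx
  have h2 : γ F = γ E + γ (F \ E) := by
    rw [← hadd _ hE _ h1 hd, Set.union_diff_cancel hEF]
  have := hγ0 _ h1
  linarith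

lemma mySubadd (hdiff : ∀ E ∈ R, ∀ F ∈ R, E \ F ∈ R)
    (hγ0 : ∀ E ∈ R, 0 ≤ γ E)
    (hadd : ∀ E ∈ R, ∀ F ∈ R, Disjoint E F → γ (E ∪ F) = γ E + γ F)
    {E F : Set T} (hE : E ∈ R) (hF : F ∈ R) : γ (E ∪ F) ≤ γ E + γ F := by
  have h1 : F \ E ∈ R := hdiff _ hF _ hE
  have hd : Disjoint E (F \ E) := Set.disjoint_left.mpr fun x hx hx' => hx'.2 hx
  have h2 : γ (E ∪ F) = γ E + γ (F \ E) := by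
    rw [← hadd _ hE _ h1 hd, Set.union_diff_self]
  have h3 : γ (F \ E) ≤ γ F := myMono hdiff hγ0 hadd h1 hF Set.diff_subset
  linarith

lemma myModular (hdiff : ∀ E ∈ R, ∀ F ∈ R, E \ F ∈ R)
    (hadd : ∀ E ∈ R, ∀ F ∈ R, Disjoint E F → γ (E ∪ F) = γ E + γ F)
    {E F : Set T} (hE : E ∈ R) (hF : F ∈ R) :
    γ (E ∪ F) + γ (E ∩ F) = γ E + γ F := by
  have h1 : F \ E ∈ R := hdiff _ hF _ hE
  have hint : E ∩ F ∈ R := myInterMem hdiff hE hF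
  have hd : Disjoint E (F \ E) := Set.disjoint_left.mpr fun x hx hx' => hx'.2 hx
  have hd2 : Disjoint (E ∩ F) (F \ E) := Set.disjoint_left.mpr fun x hx hx' => hx'.2 hx.1
  have h2 : γ (E ∪ F) = γ E + γ (F \ E) := by
    rw [← hadd _ hE _ h1 hd, Set.union_diff_self]
  have h3 : γ F = γ (E ∩ F) + γ (F \ E) := by
    rw [← hadd _ hint _ h1 hd2]
    congr 1
    ext t; simp only [Set.mem_inter_iff, Set.mem_diff, Set.mem_union]; tauto
  linarith

/-- union of `E n, E (n+1), ..., E (n+k)` -/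
def unionUpTo (E : ℕ → Set T) (n : ℕ) : ℕ → Set T
  | 0 => E n
  | (k+1) => unionUpTo E n k ∪ E (n+k+1)

lemma mem_unionUpTo (E : ℕ → Set T) (n : ℕ) (k : ℕ) (t : T) :
    t ∈ unionUpTo E n k ↔ ∃ j ≤ k, t ∈ E (n + j) := by
  induction k with
  | zero => simp [unionUpTo]
  | succ k ih =>
    simp only [unionUpTo, Set.mem_union, ih]
    constructor
    · rintro (⟨j, hj, ht⟩ | ht)
      · exact ⟨j, by omega, ht⟩
      · exact ⟨k+1, le_refl _, ht⟩
    · rintro ⟨j, hj, ht⟩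
      rcases Nat.lt_or_ge j (k+1) with h | h
      · exact Or.inl ⟨j, by omega, ht⟩
      · right; convert ht using 2; omega

lemma unionUpTo_mem (E : ℕ → Set T) (hE : ∀ n, E n ∈ R)
    (hunion : ∀ E ∈ R, ∀ F ∈ R, E ∪ F ∈ R) (n k : ℕ) :
    unionUpTo E n k ∈ R := by
  induction k with
  | zero => exact hE n
  | succ k ih => exact hunion _ ih _ (hE (n+k+1))

lemma unionUpTo_mono (E : ℕ → Set T) (n : ℕ) {k k' : ℕ} (h : k ≤ k') :
    unionUpTo E n k ⊆ unionUpTo E n k' := by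
  intro t ht
  rw [mem_unionUpTo] at ht ⊢
  obtain ⟨j, hj, ht⟩ := ht
  exact ⟨j, by omega, ht⟩

lemma unionUpTo_shift (E : ℕ → Set T) {n m : ℕ} (h : n ≤ m) (k : ℕ) :
    unionUpTo E m k ⊆ unionUpTo E n (m - n + k) := by
  intro t ht
  rw [mem_unionUpTo] at ht ⊢
  obtain ⟨j, hj, ht⟩ := ht
  exact ⟨m - n + j, by omega, by convert ht using 2; omega⟩

lemma self_subset_unionUpTo (E : ℕ → Set T) (n k : ℕ) :
    E n ⊆ unionUpTo E n k := by
  intro t ht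
  rw [mem_unionUpTo]
  exact ⟨0, by omega, by simpa using ht⟩

lemma unionUpTo_bound (hdiff : ∀ E ∈ R, ∀ F ∈ R, E \ F ∈ R)
    (hγ0 : ∀ E ∈ R, 0 ≤ γ E)
    (hadd : ∀ E ∈ R, ∀ F ∈ R, Disjoint E F → γ (E ∪ F) = γ E + γ F)
    (hunion : ∀ E ∈ R, ∀ F ∈ R, E ∪ F ∈ R)
    (E : ℕ → Set T) (hE : ∀ n, E n ∈ R)
    (hsmall : ∀ n, γ (E n) ≤ (1/2 : ℝ)^n) (n k : ℕ) :
    γ (unionUpTo E n k) ≤ 2 * (1/2 : ℝ)^n - (1/2 : ℝ)^(n+k) := by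
  induction k with
  | zero =>
    have := hsmall n
    simp only [unionUpTo, Nat.add_zero]
    linarith
  | succ k ih =>
    have h1 : γ (unionUpTo E n (k+1)) ≤ γ (unionUpTo E n k) + γ (E (n+k+1)) :=
      mySubadd hdiff hγ0 hadd (unionUpTo_mem E hE hunion n k) (hE (n+k+1))
    have h2 := hsmall (n+k+1)
    have h3 : (1/2 : ℝ)^(n+(k+1)) = (1/2 : ℝ)^(n+k) * (1/2) := by
      rw [show n+(k+1) = (n+k)+1 by omega, pow_succ]
    have h4 : (1/2 : ℝ)^(n+k+1) = (1/2 : ℝ)^(n+k) * (1/2) := by rw [← pow_succ]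
    rw [h3]
    rw [h4] at h2
    linarith

end Aux

lemma hermExpand {D : Type*} [AddCommGroup D] [Module ℂ D] {s : D → D → ℂ}
    (hs : IsNonnegHermForm s) (x y : D) :
    s (x - y) (x - y) = s x x - s x y - s y x + s y y := by
  obtain ⟨hadd, hsmul, hsymm, _⟩ := hs
  have hneg : ∀ u v : D, s (-u) v = - s u v := by
    intro u v
    have := hsmul (-1) u v
    simpa [neg_one_smul] using this
  have hsub1 : ∀ u v w : D, s (u - v) w = s u w - s v w := by
    intro u v w
    rw [sub_eq_add_neg, hadd, hneg, ← sub_eq_add_neg]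
  have hsub2 : ∀ u v w : D, s w (u - v) = s w u - s w v := by
    intro u v w
    rw [hsymm w (u-v), hsub1, map_sub, ← hsymm, ← hsymm]
  rw [hsub1, hsub2, hsub2]; ring

/-- **Lemma (converse part).** If `α` and `β` are bounded nonnegative finitely additive set
functions on a ring of sets `R` and the associated form `b` is absolutely continuous with
respect to the associated form `a`, then `β` is absolutely continuous with respect
to `α`. -/
theorem set_function_abs_continuous_of_form_abs_continuous
    {T : Type*} (R : Set (Set T))
    (hne : R.Nonempty)
    (hunion : ∀ E ∈ R, ∀ F ∈ R, E ∪ F ∈ R)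
    (hdiff : ∀ E ∈ R, ∀ F ∈ R, E \ F ∈ R)
    (α β : Set T → ℝ)
    (hα0 : ∀ E ∈ R, 0 ≤ α E)
    (hαadd : ∀ E ∈ R, ∀ F ∈ R, Disjoint E F → α (E ∪ F) = α E + α F)
    (hβ0 : ∀ E ∈ R, 0 ≤ β E)
    (hβadd : ∀ E ∈ R, ∀ F ∈ R, Disjoint E F → β (E ∪ F) = β E + β F)
    (hαbdd : ∃ M : ℝ, ∀ E ∈ R, α E ≤ M)
    (hβbdd : ∃ M : ℝ, ∀ E ∈ R, β E ≤ M)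
    (a b : simpleSpan T R → simpleSpan T R → ℂ)
    (haform : IsNonnegHermForm a) (hbform : IsNonnegHermForm b)
    (ha : ∀ (E : Set T) (hE : E ∈ R) (F : Set T) (hF : F ∈ R),
      a ⟨E.indicator (fun _ => (1 : ℂ)), indicator_mem_simpleSpan hE⟩
        ⟨F.indicator (fun _ => (1 : ℂ)), indicator_mem_simpleSpan hF⟩ = (α (E ∩ F) : ℂ))
    (hb : ∀ (E : Set T) (hE : E ∈ R) (F : Set T) (hF : F ∈ R),
      b ⟨E.indicator (fun _ => (1 : ℂ)), indicator_mem_simpleSpan hE⟩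
        ⟨F.indicator (fun _ => (1 : ℂ)), indicator_mem_simpleSpan hF⟩ = (β (E ∩ F) : ℂ))
    (hac : FormAC b a) :
    ∀ ε : ℝ, 0 < ε → ∃ δ : ℝ, 0 < δ ∧ ∀ E ∈ R, α E < δ → β E < ε := by
  intro ε hε
  by_contra hcon
  push_neg at hcon
  have hchoice : ∀ n : ℕ, ∃ E ∈ R, α E < (1/2 : ℝ)^n ∧ ε ≤ β E := by
    intro n
    obtain ⟨E, hER, hEα, hEβ⟩ := hcon ((1/2 : ℝ)^n) (by positivity)
    exact ⟨E, hER, hEα, hEβ⟩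
  choose E hER hEα hEβ using hchoice
  obtain ⟨M, hM⟩ := hβbdd
  -- the union sets
  have hU : ∀ n k, unionUpTo E n k ∈ R := fun n k => unionUpTo_mem E hER hunion n k
  set L : ℕ → ℝ := fun n => sSup (Set.range fun k => β (unionUpTo E n k)) with hLdef
  have hrne : ∀ n, (Set.range fun k => β (unionUpTo E n k)).Nonempty := fun n =>
    ⟨β (unionUpTo E n 0), 0, rfl⟩
  have hrbdd : ∀ n, BddAbove (Set.range fun k => β (unionUpTo E n k)) := by
    intro n
    exact ⟨M, by rintro x ⟨kk, rfl⟩; exact hM _ (hU n kk)⟩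
  have hle : ∀ n k, β (unionUpTo E n k) ≤ L n := fun n k =>
    le_csSup (hrbdd n) ⟨k, rfl⟩
  have hLanti : Antitone L := by
    apply antitone_nat_of_succ_le
    intro n
    apply csSup_le (hrne (n+1))
    rintro x ⟨kk, rfl⟩
    have hsub : unionUpTo E (n+1) kk ⊆ unionUpTo E n (1 + kk) := by
      have h := unionUpTo_shift E (Nat.le_succ n) kk
      simpa using h
    calc β (unionUpTo E (n+1) kk) ≤ β (unionUpTo E n (1 + kk)) :=
          myMono hdiff hβ0 hβadd (hU (n+1) kk) (hU n (1+kk)) hsub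
      _ ≤ L n := hle n (1+kk)
  have hLε : ∀ n, ε ≤ L n := fun n => le_trans (hEβ n) (hle n 0)
  have hLbdd : BddBelow (Set.range L) := ⟨ε, by rintro x ⟨n, rfl⟩; exact hLε n⟩
  have hLconv : Tendsto L atTop (𝓝 (⨅ n, L n)) := tendsto_atTop_ciInf hLanti hLbdd
  have hLcauchy : CauchySeq L := hLconv.cauchySeq
  -- choose the truncation indices
  have hk : ∀ n, ∃ kk, L n - (1/2 : ℝ)^n < β (unionUpTo E n kk) := by
    intro n
    have hlt : L n - (1/2 : ℝ)^n < L n := by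
      have : (0:ℝ) < (1/2 : ℝ)^n := by positivity
      linarith
    obtain ⟨x, ⟨kk, rfl⟩, hx⟩ := exists_lt_of_lt_csSup (hrne n) hlt
    exact ⟨kk, hx⟩
  choose k hkk using hk
  set G : ℕ → Set T := fun n => unionUpTo E n (k n) with hGdef
  have hGR : ∀ n, G n ∈ R := fun n => hU n (k n)
  have hGβL : ∀ n, L n - (1/2 : ℝ)^n < β (G n) := hkk
  have hGβε : ∀ n, ε ≤ β (G n) := by
    intro n
    refine le_trans (hEβ n) (myMono hdiff hβ0 hβadd (hER n) (hGR n) ?_)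
    exact self_subset_unionUpTo E n (k n)
  have hGα : ∀ n, α (G n) ≤ 2 * (1/2 : ℝ)^n := by
    intro n
    have h1 := unionUpTo_bound hdiff hα0 hαadd hunion E hER
      (fun m => le_of_lt (hEα m)) n (k n)
    have h2 : (0:ℝ) ≤ (1/2 : ℝ)^(n + k n) := by positivity
    linarith
  -- union bound
  have hUnionβ : ∀ n m, n ≤ m → β (G n ∪ G m) ≤ L n := by
    intro n m hnm
    set K := max (k n) ((m - n) + k m) with hK
    have h1 : G n ⊆ unionUpTo E n K := unionUpTo_mono E n (le_max_left _ _)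
    have h2 : G m ⊆ unionUpTo E n K :=
      subset_trans (unionUpTo_shift E hnm (k m)) (unionUpTo_mono E n (le_max_right _ _))
    have h3 : G n ∪ G m ⊆ unionUpTo E n K := Set.union_subset h1 h2
    calc β (G n ∪ G m) ≤ β (unionUpTo E n K) :=
          myMono hdiff hβ0 hβadd (hunion _ (hGR n) _ (hGR m)) (hU n K) h3
      _ ≤ L n := hle n K
  set d : ℕ × ℕ → ℝ :=
    fun p => β (G p.1) + β (G p.2) - 2 * β (G p.1 ∩ G p.2) with hddef
  have hdsymm : ∀ n m, d (n, m) = d (m, n) := by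
    intro n m
    simp only [hddef]
    rw [Set.inter_comm]
    ring
  have hdnn : ∀ p : ℕ × ℕ, 0 ≤ d p := by
    rintro ⟨n, m⟩
    have h1 : β (G n ∩ G m) ≤ β (G n) :=
      myMono hdiff hβ0 hβadd (myInterMem hdiff (hGR n) (hGR m)) (hGR n)
        Set.inter_subset_left
    have h2 : β (G n ∩ G m) ≤ β (G m) :=
      myMono hdiff hβ0 hβadd (myInterMem hdiff (hGR n) (hGR m)) (hGR m)
        Set.inter_subset_right
    simp only [hddef]
    linarith
  have hdkey : ∀ n m, n ≤ m → d (n, m) ≤ (L n - L m) + (1/2 : ℝ)^n + (1/2 : ℝ)^m := by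
    intro n m hnm
    have hmod : β (G n ∪ G m) + β (G n ∩ G m) = β (G n) + β (G m) :=
      myModular hdiff hβadd (hGR n) (hGR m)
    have h1 := hUnionβ n m hnm
    have h2 := hGβL n
    have h3 := hGβL m
    simp only [hddef]
    linarith
  have hd0 : Tendsto d atTop (𝓝 0) := by
    clear_value L G d
    rw [Metric.tendsto_nhds]
    intro η hη
    obtain ⟨N1, hN1⟩ := Metric.cauchySeq_iff.mp hLcauchy (η/2) (by linarith)
    obtain ⟨N2, hN2⟩ := exists_pow_lt_of_lt_one (show (0:ℝ) < η/4 by linarith)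
      (show (1/2 : ℝ) < 1 by norm_num)
    have hpow : ∀ n : ℕ, max N1 N2 ≤ n → (1/2 : ℝ)^n < η/4 := by
      intro n hn
      calc (1/2 : ℝ)^n ≤ (1/2 : ℝ)^N2 :=
            pow_le_pow_of_le_one (by norm_num) (by norm_num) (le_trans (le_max_right _ _) hn)
        _ < η/4 := hN2
    filter_upwards [eventually_ge_atTop ((max N1 N2, max N1 N2) : ℕ × ℕ)]
    rintro ⟨n, m⟩ hp
    have hn : max N1 N2 ≤ n := hp.1
    have hm : max N1 N2 ≤ m := hp.2
    have hdist : dist (d (n, m)) 0 = d (n, m) := by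
      rw [Real.dist_eq, sub_zero, abs_of_nonneg (hdnn (n, m))]
    have hL : ∀ i j : ℕ, max N1 N2 ≤ i → max N1 N2 ≤ j → L i - L j < η/2 := by
      intro i j hi hj
      have := hN1 i (le_trans (le_max_left _ _) hi) j (le_trans (le_max_left _ _) hj)
      rw [Real.dist_eq] at this
      calc L i - L j ≤ |L i - L j| := le_abs_self _
        _ < η/2 := this
    show dist (d (n, m)) 0 < η
    rw [hdist]
    rcases le_total n m with hnm | hmn
    · have e1 := hdkey n m hnm
      have e2 := hpow n hn
      have e3 := hpow m hm
      have e4 := hL n m hn hm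
      linarith [e1, e2, e3, e4]
    · have e1 := hdkey m n hmn
      have e2 := hpow n hn
      have e3 := hpow m hm
      have e4 := hL m n hm hn
      rw [hdsymm]
      linarith [e1, e2, e3, e4]
  -- the sequence of simple functions
  set x : ℕ → simpleSpan T R :=
    fun n => ⟨(G n).indicator (fun _ => (1 : ℂ)), indicator_mem_simpleSpan (hGR n)⟩
    with hxdef
  have hax : ∀ n, a (x n) (x n) = (α (G n) : ℂ) := by
    intro n
    rw [hxdef]
    rw [ha (G n) (hGR n) (G n) (hGR n), Set.inter_self]
  have hbx : ∀ n m, b (x n) (x m) = (β (G n ∩ G m) : ℂ) := by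
    intro n m
    rw [hxdef]
    exact hb (G n) (hGR n) (G m) (hGR m)
  have haT : Tendsto (fun n => a (x n) (x n)) atTop (𝓝 0) := by
    have h1 : Tendsto (fun n => α (G n)) atTop (𝓝 0) := by
      apply squeeze_zero (fun n => hα0 _ (hGR n)) hGα
      have := (tendsto_pow_atTop_nhds_zero_of_lt_one
        (show (0:ℝ) ≤ 1/2 by norm_num) (show (1/2:ℝ) < 1 by norm_num)).const_mul (2:ℝ)
      simpa using this
    have h2 : Tendsto (fun n => ((α (G n) : ℝ) : ℂ)) atTop (𝓝 0) := by
      have := (Complex.continuous_ofReal.tendsto (0:ℝ)).comp h1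
      simpa [Function.comp_def] using this
    simpa only [hax] using h2
  have hbT : Tendsto (fun p : ℕ × ℕ => b (x p.1 - x p.2) (x p.1 - x p.2)) atTop (𝓝 0) := by
    have heq : ∀ p : ℕ × ℕ, b (x p.1 - x p.2) (x p.1 - x p.2) = ((d p : ℝ) : ℂ) := by
      rintro ⟨n, m⟩
      rw [hermExpand hbform, hbx, hbx, hbx, hbx, Set.inter_self, Set.inter_self,
        Set.inter_comm (G m) (G n)]
      simp only [hddef]
      push_cast
      ring
    have h2 : Tendsto (fun p : ℕ × ℕ => ((d p : ℝ) : ℂ)) atTop (𝓝 0) := by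
      have := (Complex.continuous_ofReal.tendsto (0:ℝ)).comp hd0
      simpa [Function.comp_def] using this
    simpa only [heq] using h2
  have hfinal := hac x haT hbT
  have hβT : Tendsto (fun n => β (G n)) atTop (𝓝 0) := by
    have h1 : Tendsto (fun n => (β (G n) : ℂ)) atTop (𝓝 0) := by
      have : ∀ n, b (x n) (x n) = (β (G n) : ℂ) := by
        intro n; rw [hbx n n, Set.inter_self]
      simpa only [this] using hfinal
    have := (Complex.continuous_re.tendsto (0:ℂ)).comp h1
    simpa [Function.comp_def] using this
  have : ε ≤ 0 := ge_of_tendsto hβT (Filter.Eventually.of_forall hGβε)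
  linarith
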